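/- Fix an integer N ≥ 2, and for each P > 0 let φ(P) ∈ [1,N] be the unique solution of (1+NPφ)^{N-1} = (1+Pφ(N-φ))^N. Then φ(P) → 1 as P → 0+. -/

import Mathlib

theorem stmt_6 (N : ℕ) (hN : 2 ≤ N) (φ : ℝ → ℝ)
    (hsol : ∀ P : ℝ, 0 < P → φ P ∈ Set.Icc 1 (N : ℝ) ∧
      (1 + (N : ℝ) * P * φ P) ^ (N - 1) = (1 + P * φ P * ((N : ℝ) - φ P)) ^ N)
    (huniq : ∀ P : ℝ, 0 < P → ∀ ψ : ℝ, ψ ∈ Set.Icc 1 (N : ℝ) →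
      (1 + (N : ℝ) * P * ψ) ^ (N - 1) = (1 + P * ψ * ((N : ℝ) - ψ)) ^ N → ψ = φ P) :
    Filter.Tendsto φ (nhdsWithin 0 (Set.Ioi 0)) (nhds 1) := by
  rw [Metric.tendsto_nhdsWithin_nhds]
  intro ε hε
  have hN0 : (0:ℝ) < N := by exact_mod_cast (by omega : 0 < N)
  refine ⟨ε / (N:ℝ)^3, by positivity, ?_⟩
  intro P hPmem hPd
  have hP : (0:ℝ) < P := hPmem
  obtain ⟨⟨hx1, hxN⟩, heq⟩ := hsol P hP
  rw [Real.dist_eq, sub_zero, abs_of_pos hP] at hPd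
  have ht : P < ε / (N:ℝ)^3 := hPd
  have hx0 : (0:ℝ) < φ P := lt_of_lt_of_le one_pos hx1
  have key : φ P < 1 + ε := by
    by_contra hcon
    push_neg at hcon
    set x := φ P with hxdef
    set u := (N:ℝ) * P * x with hudef
    set v := P * x * ((N:ℝ) - x) with hvdef
    have hupos : 0 < u := mul_pos (mul_pos hN0 hP) hx0
    have hv0 : 0 ≤ v := mul_nonneg (mul_nonneg hP.le hx0.le) (by linarith)
    have h1u : (0:ℝ) < 1 + u := by linarith
    have h1v : (0:ℝ) < 1 + v := by linarith
    have hlogu : 1 - (1+u)⁻¹ ≤ Real.log (1+u) := by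
      have h := Real.log_le_sub_one_of_pos (inv_pos.mpr h1u)
      rw [Real.log_inv] at h
      linarith
    have hlogv : Real.log (1+v) ≤ v := by
      have h := Real.log_le_sub_one_of_pos h1v
      linarith
    have htN : (N:ℝ)^3 * P < ε := by
      have h := (lt_div_iff₀ (show (0:ℝ) < (N:ℝ)^3 by positivity)).mp ht
      linarith
    have hNu : ((N:ℝ) - x) * u < x - 1 := by
      have h1 : u ≤ (N:ℝ)^2 * P := by
        rw [hudef]; nlinarith
      have h2 : ((N:ℝ) - x) * u ≤ (N:ℝ) * u := by nlinarith
      nlinarith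
    have hkey : (N:ℝ) * v < ((N:ℝ) - 1) * (1 - (1+u)⁻¹) := by
      have h1 : 1 - (1+u)⁻¹ = u / (1+u) := by field_simp; ring
      rw [h1, mul_div_assoc', lt_div_iff₀ h1u]
      have hNv : (N:ℝ) * v = u * ((N:ℝ) - x) := by rw [hudef, hvdef]; ring
      nlinarith [hNu, hupos, h1u]
    have hcast : ((N - 1 : ℕ) : ℝ) = (N:ℝ) - 1 := by
      have : (1:ℕ) ≤ N := by omega
      push_cast [Nat.cast_sub this]
      ring
    have hlt : Real.log ((1 + v) ^ N) < Real.log ((1 + u) ^ (N - 1)) := by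
      rw [Real.log_pow, Real.log_pow, hcast]
      calc (N:ℝ) * Real.log (1+v) ≤ (N:ℝ) * v :=
            mul_le_mul_of_nonneg_left hlogv hN0.le
        _ < ((N:ℝ) - 1) * (1 - (1+u)⁻¹) := hkey
        _ ≤ ((N:ℝ) - 1) * Real.log (1+u) := by
            apply mul_le_mul_of_nonneg_left hlogu
            have : (2:ℝ) ≤ N := by exact_mod_cast hN
            linarith
    rw [← heq] at hlt
    exact lt_irrefl _ hlt
  rw [Real.dist_eq, abs_lt]
  constructor <;> linarith
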